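/- Let y be a q-ary string obtained from x by one deduplication with transposition, i.e., y = a·b·c·b·d and x = a·b·c·d with b non-empty. Then for any positive integer k, the number of distinct length-k substrings of x is at least the number of distinct length-k substrings of y minus 2(k-1). -/

import Mathlib

open scoped BigOperators

/-- One duplication-with-transposition step: `x = a·b·c·d → y = a·b·c·b·d`, `b` non-empty. -/
def DupStep {q : ℕ} (x y : List (Fin q)) : Prop :=
  ∃ a b c d : List (Fin q), b ≠ [] ∧ x = a ++ b ++ c ++ d ∧ y = a ++ b ++ c ++ b ++ d

/-- `DupPath m x y` : `y` is obtained from `x` by exactly `m` duplication steps. -/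
def DupPath {q : ℕ} : ℕ → List (Fin q) → List (Fin q) → Prop
  | 0, x, y => x = y
  | n + 1, x, y => ∃ z, DupStep x z ∧ DupPath n z y

/-- Hamming distance between two lists (of equal length in intended use). -/
def listHammingDist {q : ℕ} (b b' : List (Fin q)) : ℕ :=
  ((b.zip b').filter fun p => decide (p.1 ≠ p.2)).length

/-- One β-approximate duplication-with-transposition step. -/
def ApproxStep {q : ℕ} (β : ℝ) (x y : List (Fin q)) : Prop :=
  ∃ a b c bh d : List (Fin q), b ≠ [] ∧ bh.length = b.length ∧
    (listHammingDist b bh : ℝ) ≤ β * b.length ∧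
    x = a ++ b ++ c ++ d ∧ y = a ++ b ++ c ++ bh ++ d

/-- `ApproxPath β m x y` : `y` obtained from `x` by exactly `m` β-approximate duplications. -/
def ApproxPath {q : ℕ} (β : ℝ) : ℕ → List (Fin q) → List (Fin q) → Prop
  | 0, x, y => x = y
  | n + 1, x, y => ∃ z, ApproxStep β x z ∧ ApproxPath β n z y

/-- The root of a string: the subsequence of first occurrences of symbols. -/
def firstOccs {q : ℕ} (l : List (Fin q)) : List (Fin q) :=
  l.foldl (fun acc a => if a ∈ acc then acc else acc ++ [a]) []

namespace Stmt4Aux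

variable {q : ℕ}

/-- The finset of length-`k` infixes of `l`. -/
def infK (k : ℕ) (l : List (Fin q)) : Finset (List (Fin q)) :=
  ((Finset.range (l.length + 1)).image (fun i => (l.drop i).take k)).filter
    (fun s => s.length = k)

lemma infix_iff_exists {k : ℕ} {l s : List (Fin q)} (hlen : s.length = k) :
    s <:+: l ↔ ∃ i, i + k ≤ l.length ∧ s = (l.drop i).take k := by
  constructor
  · rintro ⟨t, u, rfl⟩
    refine ⟨t.length, by simp [hlen], ?_⟩
    rw [show t ++ s ++ u = t ++ (s ++ u) by simp, List.drop_left, ← hlen, List.take_left]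
  · rintro ⟨i, hi, rfl⟩
    exact ((List.take_prefix k (l.drop i)).isInfix).trans (List.drop_suffix i l).isInfix

lemma mem_infK {k : ℕ} {l s : List (Fin q)} :
    s ∈ infK k l ↔ s.length = k ∧ s <:+: l := by
  constructor
  · intro hs
    simp only [infK, Finset.mem_filter, Finset.mem_image, Finset.mem_range,
      decide_eq_true_eq] at hs
    obtain ⟨⟨i, _, rfl⟩, hlen⟩ := hs
    exact ⟨hlen, ((List.take_prefix k (l.drop i)).isInfix).trans
      (List.drop_suffix i l).isInfix⟩
  · rintro ⟨hlen, hinf⟩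
    obtain ⟨i, hi, rfl⟩ := (infix_iff_exists hlen).1 hinf
    simp only [infK, Finset.mem_filter, Finset.mem_image, Finset.mem_range,
      decide_eq_true_eq]
    exact ⟨⟨i, by omega, rfl⟩, hlen⟩

lemma card_infK_le {k : ℕ} (hk : 0 < k) {l : List (Fin q)} (hl : l.length ≤ 2 * (k - 1)) :
    (infK k l).card ≤ k - 1 := by
  have hsub : infK k l ⊆ (Finset.range (k - 1)).image (fun i => (l.drop i).take k) := by
    intro s hs
    rw [mem_infK] at hs
    obtain ⟨hlen, hinf⟩ := hs
    obtain ⟨i, hi, rfl⟩ := (infix_iff_exists hlen).1 hinf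
    simp only [Finset.mem_image, Finset.mem_range]
    exact ⟨i, by omega, rfl⟩
  calc (infK k l).card ≤ _ := Finset.card_le_card hsub
    _ ≤ (Finset.range (k - 1)).card := Finset.card_image_le
    _ = k - 1 := Finset.card_range _

lemma window_eq (l : List (Fin q)) {m i k t : ℕ} (hmi : m ≤ i) (hik : i + k ≤ m + t) :
    (((l.drop m).take t).drop (i - m)).take k = (l.drop i).take k := by
  rw [List.drop_take, List.drop_drop, show m + (i - m) = i by omega, List.take_take,
    show k ⊓ (t - (i - m)) = k by omega]

lemma take_common_prefix {l l' : List (Fin q)} {p : ℕ} (h : l.take p = l'.take p)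
    {i k : ℕ} (hik : i + k ≤ p) : (l.drop i).take k = (l'.drop i).take k := by
  have h1 : ∀ z : List (Fin q), (z.drop i).take k = (((z.take p).drop i)).take k := by
    intro z
    rw [List.drop_take, List.take_take, show k ⊓ (p - i) = k by omega]
  rw [h1 l, h1 l', h]

lemma drop_middle {u w v : List (Fin q)} {j k : ℕ} (hjk : j + k ≤ w.length) :
    ((u ++ w ++ v).drop (u.length + j)).take k = (w.drop j).take k := by
  rw [List.append_assoc, List.drop_length_add_append, List.drop_append,
    show j - w.length = 0 by omega, List.drop_zero, List.take_append,
    show k - (w.drop j).length = 0 by simp; omega]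
  simp

lemma card_infK (k : ℕ) (l : List (Fin q)) :
    Nat.card {s : List (Fin q) // s.length = k ∧ s <:+: l} = (infK k l).card := by
  rw [Nat.card_congr (Equiv.subtypeEquivRight (fun s => mem_infK.symm)),
    Nat.card_eq_fintype_card, Fintype.card_coe]

end Stmt4Aux

open Stmt4Aux in
/-- a deduplication-with-transposition step decreases the number of
distinct length-`k` substrings by at most `2(k-1)`. -/
theorem stmt4 (q k : ℕ) (hk : 0 < k) (a b c d : List (Fin q)) (hb : b ≠ [])
    (x y : List (Fin q)) (hx : x = a ++ b ++ c ++ d) (hy : y = a ++ b ++ c ++ b ++ d) :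
    Nat.card {s : List (Fin q) // s.length = k ∧ s <:+: y} - 2 * (k - 1)
      ≤ Nat.card {s : List (Fin q) // s.length = k ∧ s <:+: x} := by
  subst hx hy
  set x := a ++ b ++ c ++ d with hxdef
  set y := a ++ b ++ c ++ b ++ d with hydef
  set P := a.length + b.length + c.length with hP
  set Q := P + b.length with hQ
  set w1 := (y.drop (P - (k - 1))).take (2 * (k - 1)) with hw1
  set w2 := (y.drop (Q - (k - 1))).take (2 * (k - 1)) with hw2
  have hxlen : x.length = a.length + b.length + c.length + d.length := by
    simp [hxdef]; omega
  have hylen : y.length = a.length + b.length + c.length + b.length + d.length := by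
    simp [hydef]; omega
  have key : infK k y ⊆ infK k x ∪ infK k w1 ∪ infK k w2 := by
    intro s hs
    rw [mem_infK] at hs
    obtain ⟨hlen, hinf⟩ := hs
    obtain ⟨i, hi, rfl⟩ := (infix_iff_exists hlen).1 hinf
    simp only [Finset.mem_union, mem_infK]
    -- helper to place a crossing substring into a window
    have hwin : ∀ p : ℕ, i < p → p < i + k →
        ((y.drop i).take k) <:+: (y.drop (p - (k - 1))).take (2 * (k - 1)) := by
      intro p h1 h2
      have hmi : p - (k - 1) ≤ i := by omega
      have hik : i + k ≤ (p - (k - 1)) + 2 * (k - 1) := by omega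
      rw [← window_eq y hmi hik]
      exact ((List.take_prefix _ _).isInfix).trans (List.drop_suffix _ _).isInfix
    by_cases h1 : i + k ≤ P
    · -- inside the common prefix a++b++c
      left; left
      refine ⟨hlen, (infix_iff_exists hlen).2 ⟨i, by omega, ?_⟩⟩
      refine take_common_prefix ?_ h1
      have : y.take P = a ++ b ++ c := by
        rw [hydef, show a ++ b ++ c ++ b ++ d = (a ++ b ++ c) ++ (b ++ d) by simp,
          show P = (a ++ b ++ c).length by simp [hP]; omega, List.take_left]
      rw [this, hxdef, show a ++ b ++ c ++ d = (a ++ b ++ c) ++ d by simp,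
        show P = (a ++ b ++ c).length by simp [hP]; omega, List.take_left]
    · by_cases h2 : i < P
      · -- crosses the first boundary P
        left; right
        exact ⟨hlen, hwin P h2 (by omega)⟩
      · push_neg at h2
        by_cases h3 : i + k ≤ Q
        · -- inside the second copy of b; equals a substring of the first copy
          left; left
          set j := i - P with hj
          have hy' : (y.drop i).take k = (b.drop j).take k := by
            rw [show i = (a ++ b ++ c).length + j by simp [hj, hP]; omega,
              show y = (a ++ b ++ c) ++ b ++ d by simp [hydef]]
            exact drop_middle (by omega)
          have hx' : (x.drop (a.length + j)).take k = (b.drop j).take k := by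
            rw [show x = a ++ b ++ (c ++ d) by simp [hxdef],
              show a.length = (a : List (Fin q)).length by rfl]
            exact drop_middle (by omega)
          refine ⟨hlen, (infix_iff_exists hlen).2 ⟨a.length + j, by omega, ?_⟩⟩
          rw [hy', hx']
        · by_cases h4 : Q ≤ i
          · -- inside d
            left; left
            set j := i - Q with hj
            have hy' : (y.drop i).take k = (d.drop j).take k := by
              rw [show i = (a ++ b ++ c ++ b).length + j by simp [hj, hQ, hP]; omega,
                show y = (a ++ b ++ c ++ b) ++ d ++ [] by simp [hydef]]
              exact drop_middle (by omega)
            have hx' : (x.drop (P + j)).take k = (d.drop j).take k := by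
              rw [show P + j = (a ++ b ++ c).length + j by simp [hP]; omega,
                show x = (a ++ b ++ c) ++ d ++ [] by simp [hxdef]]
              exact drop_middle (by omega)
            refine ⟨hlen, (infix_iff_exists hlen).2 ⟨P + j, by omega, ?_⟩⟩
            rw [hy', hx']
          · -- crosses the second boundary Q
            right
            exact ⟨hlen, hwin Q (by omega) (by omega)⟩
  have hcard : (infK k y).card ≤ (infK k x).card + 2 * (k - 1) := by
    calc (infK k y).card ≤ (infK k x ∪ infK k w1 ∪ infK k w2).card :=
          Finset.card_le_card key
      _ ≤ (infK k x ∪ infK k w1).card + (infK k w2).card := Finset.card_union_le _ _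
      _ ≤ (infK k x).card + (infK k w1).card + (infK k w2).card := by
          exact Nat.add_le_add_right (Finset.card_union_le _ _) _
      _ ≤ (infK k x).card + (k - 1) + (k - 1) := by
          have h1 : (infK k w1).card ≤ k - 1 :=
            card_infK_le hk (by rw [hw1]; exact List.length_take_le _ _)
          have h2 : (infK k w2).card ≤ k - 1 :=
            card_infK_le hk (by rw [hw2]; exact List.length_take_le _ _)
          omega
      _ ≤ (infK k x).card + 2 * (k - 1) := by omega
  rw [card_infK, card_infK]
  omega
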